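/- Let A be an n×n Hermitian complex matrix whose Moore–Penrose inverse A⁺ is positive-definite on the subspace 𝒳 := im(X) for some n×p matrix X (i.e., xᴴ A⁺ x > 0 for all nonzero x ∈ 𝒳). Then A⁺𝒳 ⊕ 𝒳^⊥ = ℂⁿ, i.e., the image of 𝒳 under A⁺ and the orthogonal complement of 𝒳 are complementary subspaces. -/

import Mathlib

open Matrix

def IsMPInv {m n : Type*} [Fintype m] [Fintype n] (A : Matrix m n ℂ) (Z : Matrix n m ℂ) : Prop :=
  A * Z * A = A ∧ Z * A * Z = Z ∧ (A * Z)ᴴ = A * Z ∧ (Z * A)ᴴ = Z * A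

/-- If `A` is Hermitian and `A⁺` is positive-definite on `𝒳 = im X`,
then `A⁺𝒳 ⊕ 𝒳ᗮ = ℂⁿ`. -/
theorem stmt6 {n p : ℕ}
    (A : Matrix (Fin n) (Fin n) ℂ) (hA : Aᴴ = A)
    (Ap : Matrix (Fin n) (Fin n) ℂ) (hAp : IsMPInv A Ap)
    (X : Matrix (Fin n) (Fin p) ℂ)
    (hPD : ∀ x ∈ LinearMap.range (Matrix.toEuclideanLin X), x ≠ 0 →
      0 < RCLike.re (dotProduct (star (x : Fin n → ℂ)) (Ap.mulVec x))) :
    Disjoint (Submodule.map (Matrix.toEuclideanLin Ap)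
        (LinearMap.range (Matrix.toEuclideanLin X)))
      ((LinearMap.range (Matrix.toEuclideanLin X))ᗮ) ∧
    Submodule.map (Matrix.toEuclideanLin Ap)
        (LinearMap.range (Matrix.toEuclideanLin X)) ⊔
      (LinearMap.range (Matrix.toEuclideanLin X))ᗮ = ⊤ := by
  set T := Matrix.toEuclideanLin Ap with hT
  set V := LinearMap.range (Matrix.toEuclideanLin X) with hV
  have hinner : ∀ x : EuclideanSpace ℂ (Fin n),
      (inner ℂ x (T x) : ℂ) = dotProduct (star (x : Fin n → ℂ)) (Ap.mulVec x) := by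
    intro x
    have : (T x : Fin n → ℂ) = Ap.mulVec x := rfl
    simp [inner, dotProduct, this, mul_comm]
  -- key: if x ∈ V and ⟪x, T x⟫ = 0 then x = 0
  have key : ∀ x ∈ V, (inner ℂ x (T x) : ℂ) = 0 → x = 0 := by
    intro x hx h0
    by_contra hne
    have := hPD x hx hne
    rw [← hinner x, h0] at this
    simp at this
  have hdisj : Disjoint (Submodule.map T V) Vᗮ := by
    rw [Submodule.disjoint_def]
    rintro z ⟨x, hx, rfl⟩ hz
    have h0 : (inner ℂ x (T x) : ℂ) = 0 := hz x hx
    rw [key x hx h0]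
    simp
  refine ⟨hdisj, ?_⟩
  -- injectivity of T restricted to V
  have hinj : Function.Injective (T.comp V.subtype) := by
    rw [← LinearMap.ker_eq_bot, LinearMap.ker_eq_bot']
    rintro ⟨x, hx⟩ hm
    have hTx : T x = 0 := hm
    have h0 : (inner ℂ x (T x) : ℂ) = 0 := by rw [hTx]; simp
    exact Subtype.ext (key x hx h0)
  have hrange : LinearMap.range (T.comp V.subtype) = Submodule.map T V := by
    rw [LinearMap.range_comp, Submodule.range_subtype]
  have hfr : Module.finrank ℂ (Submodule.map T V) = Module.finrank ℂ V := by
    rw [← hrange]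
    exact LinearMap.finrank_range_of_inj hinj
  apply Submodule.eq_top_of_finrank_eq
  have h1 := Submodule.finrank_sup_add_finrank_inf_eq (Submodule.map T V) Vᗮ
  rw [Disjoint.eq_bot hdisj] at h1
  simp only [finrank_bot, add_zero] at h1
  rw [h1, hfr, Submodule.finrank_add_finrank_orthogonal]
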